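/- Let n ≥ 1, T ≥ 1, N₀ > 0, let μ ∈ ℂ^T, let μ̃ : ℝⁿ → ℂ^T be twice continuously differentiable, and let η₀ ∈ ℝⁿ. Define the assumed log-likelihood ℓ(y, η) = −T·log(π N₀) − ‖y − μ̃(η)‖²/N₀ and ε = μ − μ̃(η₀). Then for all standard basis vectors eᵢ, eⱼ of ℝⁿ, ∫ D²_η ℓ(y, ·)(η₀)(eᵢ, eⱼ) dP_μ(y) = (2/N₀)·Re( ⟨ε, ∂ᵢ∂ⱼμ̃(η₀)⟩ − ⟨∂ᵢμ̃(η₀), ∂ⱼμ̃(η₀)⟩ ). -/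

import Mathlib

open MeasureTheory ProbabilityTheory
open scoped ComplexConjugate

/-- The complex Gaussian measure on `ℂ` with mean `m` and variance `N₀`: the real and imaginary
parts are independent real Gaussians with means `m.re`, `m.im` and common variance `N₀/2`. -/
noncomputable def complexGaussian (m : ℂ) (N0 : ℝ) : Measure ℂ :=
  ((gaussianReal m.re (N0 / 2).toNNReal).prod
    (gaussianReal m.im (N0 / 2).toNNReal)).map Complex.measurableEquivRealProd.symm

/-- The complex Gaussian product measure `P_μ` on `ℂ^T`. -/
noncomputable def gaussianPi (T : ℕ) (μ : Fin T → ℂ) (N0 : ℝ) : Measure (Fin T → ℂ) :=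
  Measure.pi fun t => complexGaussian (μ t) N0

/-- The Hermitian inner product `⟨a,b⟩ = ∑ t, conj (a t) * b t` on `ℂ^T`. -/
noncomputable def hip {T : ℕ} (a b : Fin T → ℂ) : ℂ := ∑ t, conj (a t) * b t

/-- The assumed log-likelihood `ℓ(y, η) = −T·log(π N₀) − ‖y − μ̃(η)‖²/N₀`. -/
noncomputable def loglik {n T : ℕ} (N0 : ℝ) (μtil : (Fin n → ℝ) → Fin T → ℂ)
    (y : Fin T → ℂ) (η : Fin n → ℝ) : ℝ :=
  -(T : ℝ) * Real.log (Real.pi * N0) - (∑ t, Complex.normSq (y t - μtil η t)) / N0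

open Real
open scoped NNReal ENNReal

lemma integrable_id_mul_pdf {v : ℝ≥0} (hv : 0 < (v:ℝ)) (m : ℝ) :
    Integrable (fun x => x * gaussianPDFReal m v x) := by
  have hb : 0 < (2 * (v:ℝ))⁻¹ := by positivity
  have hg : Integrable (fun u : ℝ => (u + m) * Real.exp (-(2*(v:ℝ))⁻¹ * u ^ 2)) := by
    have h1 := integrable_mul_exp_neg_mul_sq hb
    have h2 := (integrable_exp_neg_mul_sq hb).const_mul m
    simpa [add_mul, Pi.add_def] using h1.add h2
  have := hg.comp_sub_right m
  simp only [sub_add_cancel] at this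
  have : Integrable (fun x : ℝ => x * Real.exp (-(x - m)^2 / (2*(v:ℝ)))) := by
    refine this.congr (Filter.Eventually.of_forall fun x => ?_)
    simp only []
    rw [div_eq_inv_mul]
    ring_nf
  simpa [gaussianPDFReal, mul_comm, mul_assoc, mul_left_comm] using this.const_mul (√(2 * π * v))⁻¹

lemma integrable_id_gaussian {v : ℝ≥0} (hv : 0 < (v:ℝ)) (m : ℝ) :
    Integrable (fun x => x) (gaussianReal m v) := by
  have hv' : v ≠ 0 := by exact_mod_cast hv.ne'
  rw [gaussianReal_of_var_ne_zero _ hv']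
  rw [integrable_withDensity_iff (measurable_gaussianPDF _ _) (by
    refine Filter.Eventually.of_forall fun x => ?_
    exact ENNReal.ofReal_lt_top)]
  refine (integrable_id_mul_pdf hv m).congr (Filter.Eventually.of_forall fun x => ?_)
  simp only [gaussianPDF, ENNReal.toReal_ofReal (gaussianPDFReal_nonneg _ _ _)]

lemma integral_id_gaussian {v : ℝ≥0} (hv : 0 < (v:ℝ)) (m : ℝ) :
    ∫ x, x ∂(gaussianReal m v) = m := by
  have hv' : v ≠ 0 := by exact_mod_cast hv.ne'
  rw [gaussianReal_of_var_ne_zero _ hv']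
  have hmeq : gaussianPDF m v = fun x => ((fun x => (gaussianPDFReal m v x).toNNReal) x : ℝ≥0∞) := by
    funext x; rfl
  rw [hmeq, integral_withDensity_eq_integral_smul
    ((measurable_gaussianPDFReal m v).real_toNNReal)]
  have hsmul : ∀ x : ℝ, (gaussianPDFReal m v x).toNNReal • x = x * gaussianPDFReal m v x := by
    intro x
    rw [NNReal.smul_def, Real.coe_toNNReal _ (gaussianPDFReal_nonneg _ _ _), smul_eq_mul]
    ring
  simp_rw [hsmul]
  -- now compute ∫ x * pdf
  have hb : 0 < (2 * (v:ℝ))⁻¹ := by positivity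
  have key : (fun x : ℝ => x * gaussianPDFReal m v x)
      = fun x => (√(2 * π * v))⁻¹ * ((fun u => (u + m) * Real.exp (-(2*(v:ℝ))⁻¹ * u ^ 2)) (x - m)) := by
    funext x
    simp only [gaussianPDFReal, sub_add_cancel]
    rw [div_eq_inv_mul]
    ring_nf
  rw [key, integral_const_mul, integral_sub_right_eq_self (μ := volume)
    (fun u => (u + m) * Real.exp (-(2*(v:ℝ))⁻¹ * u ^ 2)) m]
  have hsplit : ∀ u : ℝ, (u + m) * Real.exp (-(2*(v:ℝ))⁻¹ * u ^ 2)
      = u * Real.exp (-(2*(v:ℝ))⁻¹ * u ^ 2) + m * Real.exp (-(2*(v:ℝ))⁻¹ * u ^ 2) := by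
    intro u; ring
  simp_rw [hsplit]
  rw [integral_add (integrable_mul_exp_neg_mul_sq hb)
    ((integrable_exp_neg_mul_sq hb).const_mul m)]
  have hodd : ∫ u : ℝ, u * Real.exp (-(2*(v:ℝ))⁻¹ * u ^ 2) = 0 := by
    have h := MeasureTheory.integral_neg_eq_self
      (fun u : ℝ => u * Real.exp (-(2*(v:ℝ))⁻¹ * u ^ 2)) volume
    simp only [neg_mul, neg_sq, neg_neg, integral_neg] at h ⊢
    linarith [h]
  rw [hodd, integral_const_mul, zero_add, integral_gaussian]
  rw [show π / (2 * (v:ℝ))⁻¹ = 2 * π * v by field_simp]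
  have h2 : √(2 * π * (v:ℝ)) ≠ 0 := by positivity
  field_simp



instance cg_isProb (m : ℂ) (N0 : ℝ) : IsProbabilityMeasure (complexGaussian m N0) :=
  Measure.isProbabilityMeasure_map (Complex.measurableEquivRealProd.symm.measurable.aemeasurable)

instance gp_isProb (T : ℕ) (μ : Fin T → ℂ) (N0 : ℝ) :
    IsProbabilityMeasure (gaussianPi T μ N0) := by
  unfold gaussianPi; infer_instance

lemma cg_symm_re (p : ℝ × ℝ) : (Complex.measurableEquivRealProd.symm p).re = p.1 := rfl
lemma cg_symm_im (p : ℝ × ℝ) : (Complex.measurableEquivRealProd.symm p).im = p.2 := rfl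

example : True := trivial

variable {N0 : ℝ}

lemma var_pos (hN0 : 0 < N0) : 0 < (((N0/2).toNNReal : ℝ≥0) : ℝ) := by
  rw [Real.coe_toNNReal _ (by positivity)]; positivity

lemma integrable_re_cg (m : ℂ) (hN0 : 0 < N0) :
    Integrable (fun z => z.re) (complexGaussian m N0) := by
  rw [complexGaussian, integrable_map_equiv]
  show Integrable (fun p : ℝ × ℝ => p.1) _
  have h := (integrable_map_measure (μ := (gaussianReal m.re (N0/2).toNNReal).prod
      (gaussianReal m.im (N0/2).toNNReal)) (f := Prod.fst) (g := id)
      aestronglyMeasurable_id measurable_fst.aemeasurable)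
  rw [Measure.map_fst_prod] at h
  simp only [measure_univ, one_smul, Function.comp_def, id] at h
  exact h.mp (integrable_id_gaussian (var_pos hN0) m.re)

lemma integrable_im_cg (m : ℂ) (hN0 : 0 < N0) :
    Integrable (fun z => z.im) (complexGaussian m N0) := by
  rw [complexGaussian, integrable_map_equiv]
  show Integrable (fun p : ℝ × ℝ => p.2) _
  have h := (integrable_map_measure (μ := (gaussianReal m.re (N0/2).toNNReal).prod
      (gaussianReal m.im (N0/2).toNNReal)) (f := Prod.snd) (g := id)
      aestronglyMeasurable_id measurable_snd.aemeasurable)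
  rw [Measure.map_snd_prod] at h
  simp only [measure_univ, one_smul, Function.comp_def, id] at h
  exact h.mp (integrable_id_gaussian (var_pos hN0) m.im)

lemma integral_re_cg (m : ℂ) (hN0 : 0 < N0) :
    ∫ z, z.re ∂(complexGaussian m N0) = m.re := by
  rw [complexGaussian, integral_map_equiv]
  show ∫ p : ℝ × ℝ, p.1 ∂_ = m.re
  have h := integral_map (μ := (gaussianReal m.re (N0/2).toNNReal).prod
      (gaussianReal m.im (N0/2).toNNReal)) (φ := Prod.fst) (f := id)
      measurable_fst.aemeasurable aestronglyMeasurable_id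
  simp only [id] at h
  rw [← h, Measure.map_fst_prod]
  simp only [measure_univ, one_smul]
  exact integral_id_gaussian (var_pos hN0) m.re

lemma integral_im_cg (m : ℂ) (hN0 : 0 < N0) :
    ∫ z, z.im ∂(complexGaussian m N0) = m.im := by
  rw [complexGaussian, integral_map_equiv]
  show ∫ p : ℝ × ℝ, p.2 ∂_ = m.im
  have h := integral_map (μ := (gaussianReal m.re (N0/2).toNNReal).prod
      (gaussianReal m.im (N0/2).toNNReal)) (φ := Prod.snd) (f := id)
      measurable_snd.aemeasurable aestronglyMeasurable_id
  simp only [id] at h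
  rw [← h, Measure.map_snd_prod]
  simp only [measure_univ, one_smul]
  exact integral_id_gaussian (var_pos hN0) m.im

lemma gaussianPi_map_eval (T : ℕ) (μ : Fin T → ℂ) (t : Fin T) :
    (gaussianPi T μ N0).map (fun y => y t) = complexGaussian (μ t) N0 := by
  refine Measure.ext fun s hs => ?_
  rw [Measure.map_apply (measurable_pi_apply t) hs]
  have : (fun y : Fin T → ℂ => y t) ⁻¹' s
      = Set.pi Set.univ (Function.update (fun _ => Set.univ) t s) := by
    ext y
    constructor
    · intro h i _
      by_cases hit : i = t
      · subst hit; simpa using h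
      · simp [Function.update_of_ne hit]
    · intro h
      have := h t (Set.mem_univ t)
      simpa using this
  rw [gaussianPi, this, Measure.pi_pi]
  rw [Finset.prod_eq_single t]
  · simp
  · intro b _ hb
    simp [Function.update_of_ne hb]
  · simp

lemma integrable_affine_cg (m w c : ℂ) (hN0 : 0 < N0) :
    Integrable (fun z : ℂ => (z - w).re * c.re + (z - w).im * c.im) (complexGaussian m N0) := by
  have h1 := ((integrable_re_cg m hN0).sub (integrable_const w.re)).mul_const c.re
  have h2 := ((integrable_im_cg m hN0).sub (integrable_const w.im)).mul_const c.im
  simpa [Complex.sub_re, Complex.sub_im, Pi.add_def] using h1.add h2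

lemma integral_affine_cg (m w c : ℂ) (hN0 : 0 < N0) :
    ∫ z, ((z - w).re * c.re + (z - w).im * c.im) ∂(complexGaussian m N0)
      = (m - w).re * c.re + (m - w).im * c.im := by
  have h1 := ((integrable_re_cg m hN0).sub (integrable_const w.re)).mul_const c.re
  have h2 := ((integrable_im_cg m hN0).sub (integrable_const w.im)).mul_const c.im
  have e1 : (fun z : ℂ => (z - w).re * c.re) = fun z => (z.re - w.re) * c.re := by
    funext z; simp [Complex.sub_re]
  have e2 : (fun z : ℂ => (z - w).im * c.im) = fun z => (z.im - w.im) * c.im := by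
    funext z; simp [Complex.sub_im]
  rw [show (fun z : ℂ => (z - w).re * c.re + (z - w).im * c.im)
      = fun z => (z.re - w.re) * c.re + (z.im - w.im) * c.im by
    funext z; simp [Complex.sub_re, Complex.sub_im]]
  rw [integral_add (by simpa [Complex.sub_re] using h1) (by simpa [Complex.sub_im] using h2)]
  rw [integral_mul_const, integral_mul_const]
  rw [integral_sub (integrable_re_cg m hN0) (integrable_const w.re)]
  rw [integral_sub (integrable_im_cg m hN0) (integrable_const w.im)]
  rw [integral_const, integral_const]
  simp [integral_re_cg m hN0, integral_im_cg m hN0, Complex.sub_re, Complex.sub_im]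

lemma integrable_coord (T : ℕ) (μ : Fin T → ℂ) (hN0 : 0 < N0) (t : Fin T) (w c : ℂ) :
    Integrable (fun y : Fin T → ℂ => (y t - w).re * c.re + (y t - w).im * c.im)
      (gaussianPi T μ N0) := by
  have hφc : Continuous fun z : ℂ => (z - w).re * c.re + (z - w).im * c.im := by
    apply Continuous.add
    · exact ((Complex.continuous_re.comp (continuous_id.sub continuous_const)).mul continuous_const)
    · exact ((Complex.continuous_im.comp (continuous_id.sub continuous_const)).mul continuous_const)
  have h := (integrable_map_measure (μ := gaussianPi T μ N0) (f := fun y => y t)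
      (g := fun z : ℂ => (z - w).re * c.re + (z - w).im * c.im)
      hφc.aestronglyMeasurable (measurable_pi_apply t).aemeasurable)
  rw [gaussianPi_map_eval] at h
  exact h.mp (integrable_affine_cg (μ t) w c hN0)

lemma integral_coord (T : ℕ) (μ : Fin T → ℂ) (hN0 : 0 < N0) (t : Fin T) (w c : ℂ) :
    ∫ y, ((y t - w).re * c.re + (y t - w).im * c.im) ∂(gaussianPi T μ N0)
      = (μ t - w).re * c.re + (μ t - w).im * c.im := by
  have hφc : Continuous fun z : ℂ => (z - w).re * c.re + (z - w).im * c.im := by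
    apply Continuous.add
    · exact ((Complex.continuous_re.comp (continuous_id.sub continuous_const)).mul continuous_const)
    · exact ((Complex.continuous_im.comp (continuous_id.sub continuous_const)).mul continuous_const)
  have h := integral_map (μ := gaussianPi T μ N0) (φ := fun y => y t)
      (f := fun z : ℂ => (z - w).re * c.re + (z - w).im * c.im)
      (measurable_pi_apply t).aemeasurable hφc.aestronglyMeasurable
  rw [gaussianPi_map_eval] at h
  rw [← h]
  exact integral_affine_cg (μ t) w c hN0


noncomputable def Bq : ℂ →L[ℝ] ℂ →L[ℝ] ℝ :=
  Complex.reCLM.smulRight Complex.reCLM + Complex.imCLM.smulRight Complex.imCLM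

lemma Bq_apply (z w : ℂ) : Bq z w = z.re * w.re + z.im * w.im := by
  simp [Bq, smul_eq_mul]

lemma hasFDerivAt_normSq (z : ℂ) : HasFDerivAt Complex.normSq ((2:ℝ) • Bq z) z := by
  have h1 : HasFDerivAt (fun w : ℂ => w.re) Complex.reCLM z := Complex.reCLM.hasFDerivAt
  have h2 : HasFDerivAt (fun w : ℂ => w.im) Complex.imCLM z := Complex.imCLM.hasFDerivAt
  have h := (h1.fun_mul h1).fun_add (h2.fun_mul h2)
  have hfun : (Complex.normSq : ℂ → ℝ) = fun w : ℂ => w.re * w.re + w.im * w.im :=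
    funext fun w => Complex.normSq_apply w
  rw [hfun]
  refine h.congr_fderiv ?_
  ext u
  simp [Bq_apply, smul_eq_mul]
  ring

lemma hasFDerivAt_loglik {n T : ℕ} {N0 : ℝ} (hN0 : 0 < N0)
    {μtil : (Fin n → ℝ) → Fin T → ℂ} (hd : Differentiable ℝ μtil)
    (y : Fin T → ℂ) (η : Fin n → ℝ) :
    HasFDerivAt (loglik N0 μtil y)
      (∑ t, (2 / N0) • ((Bq (y t - μtil η t)).comp
        ((ContinuousLinearMap.proj t).comp (fderiv ℝ μtil η)))) η := by
  have hmt : ∀ t : Fin T, HasFDerivAt (fun η => μtil η t)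
      ((ContinuousLinearMap.proj (R := ℝ) (φ := fun _ : Fin T => ℂ) t).comp (fderiv ℝ μtil η)) η :=
    fun t => by exact (ContinuousLinearMap.proj t).hasFDerivAt.comp η (hd η).hasFDerivAt
  have hnt : ∀ t : Fin T, HasFDerivAt (fun η => Complex.normSq (y t - μtil η t))
      (((2:ℝ) • Bq (y t - μtil η t)).comp
        (-((ContinuousLinearMap.proj t).comp (fderiv ℝ μtil η)))) η :=
    fun t => (hasFDerivAt_normSq _).comp η ((hmt t).const_sub (y t))
  have hS := HasFDerivAt.fun_sum (u := Finset.univ) (fun t _ => hnt t)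
  have h := (hS.const_mul N0⁻¹).const_sub (-(T : ℝ) * Real.log (Real.pi * N0))
  have heq : loglik N0 μtil y = fun η => -(T : ℝ) * Real.log (Real.pi * N0)
      - N0⁻¹ * (∑ t, Complex.normSq (y t - μtil η t)) := by
    funext η
    rw [loglik, div_eq_inv_mul]
  rw [heq]
  refine h.congr_fderiv ?_
  ext u
  simp only [ContinuousLinearMap.coe_sum', Finset.sum_apply, ContinuousLinearMap.coe_smul',
    Pi.smul_apply, ContinuousLinearMap.coe_comp', Function.comp_apply,
    ContinuousLinearMap.neg_apply, map_neg, ContinuousLinearMap.smul_apply,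
    ContinuousLinearMap.neg_apply, smul_eq_mul]
  rw [Finset.mul_sum, ← Finset.sum_neg_distrib]
  refine Finset.sum_congr rfl fun t _ => ?_
  field_simp

lemma key_pointwise {n T : ℕ} {N0 : ℝ} (hN0 : 0 < N0) {μtil : (Fin n → ℝ) → Fin T → ℂ}
    (hμtil : ContDiff ℝ 2 μtil) (y : Fin T → ℂ) (η₀ v w : Fin n → ℝ) :
    fderiv ℝ (fderiv ℝ (loglik N0 μtil y)) η₀ v w
      = (2 / N0) * ((∑ t, Bq (y t - μtil η₀ t) (fderiv ℝ (fderiv ℝ μtil) η₀ v w t))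
          - ∑ t, Bq (fderiv ℝ μtil η₀ v t) (fderiv ℝ μtil η₀ w t)) := by
  classical
  have hd : Differentiable ℝ μtil := hμtil.differentiable (by norm_num)
  have hfd : fderiv ℝ (loglik N0 μtil y) = fun η =>
      ∑ t, (2 / N0) • ((Bq (y t - μtil η t)).comp
        ((ContinuousLinearMap.proj t).comp (fderiv ℝ μtil η))) :=
    funext fun η => (hasFDerivAt_loglik hN0 hd y η).fderiv
  rw [hfd]
  have hD2 : HasFDerivAt (fderiv ℝ μtil) (fderiv ℝ (fderiv ℝ μtil) η₀) η₀ :=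
    (((hμtil.fderiv_right (m := 1) (by norm_num)).differentiable one_ne_zero) η₀).hasFDerivAt
  have hmt : ∀ t : Fin T, HasFDerivAt (fun η => μtil η t)
      ((ContinuousLinearMap.proj (R := ℝ) (φ := fun _ : Fin T => ℂ) t).comp (fderiv ℝ μtil η₀)) η₀ :=
    fun t => by exact (ContinuousLinearMap.proj t).hasFDerivAt.comp η₀ (hd η₀).hasFDerivAt
  have hBc : ∀ t : Fin T, HasFDerivAt (fun η => Bq (y t - μtil η t))
      (Bq.comp (-((ContinuousLinearMap.proj t).comp (fderiv ℝ μtil η₀)))) η₀ :=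
    fun t => by exact Bq.hasFDerivAt.comp η₀ ((hmt t).const_sub (y t))
  have hMt : ∀ t : Fin T, HasFDerivAt
      (fun η => (ContinuousLinearMap.proj (R := ℝ) (φ := fun _ : Fin T => ℂ) t).comp
        (fderiv ℝ μtil η))
      ((ContinuousLinearMap.compL ℝ (Fin n → ℝ) (Fin T → ℂ) ℂ
          (ContinuousLinearMap.proj t)).comp (fderiv ℝ (fderiv ℝ μtil) η₀)) η₀ :=
    fun t => by exact (ContinuousLinearMap.compL ℝ (Fin n → ℝ) (Fin T → ℂ) ℂ
      (ContinuousLinearMap.proj t)).hasFDerivAt.comp η₀ hD2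
  have hterm := fun t : Fin T => ((hBc t).clm_comp (hMt t)).fun_const_smul (2 / N0)
  have hL := HasFDerivAt.fun_sum (u := Finset.univ) (fun t _ => hterm t)
  rw [hL.fderiv]
  simp only [ContinuousLinearMap.coe_sum', Finset.sum_apply, ContinuousLinearMap.coe_smul',
    Pi.smul_apply, ContinuousLinearMap.add_apply, ContinuousLinearMap.coe_comp',
    Function.comp_apply, ContinuousLinearMap.flip_apply, ContinuousLinearMap.compL_apply,
    ContinuousLinearMap.neg_apply, map_neg, ContinuousLinearMap.proj_apply,
    smul_eq_mul]
  rw [mul_sub, Finset.mul_sum, Finset.mul_sum, ← Finset.sum_sub_distrib]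
  refine Finset.sum_congr rfl fun t _ => ?_
  ring


lemma hip_re {T : ℕ} (a b : Fin T → ℂ) : (hip a b).re = ∑ t, Bq (a t) (b t) := by
  rw [hip, Complex.re_sum]
  refine Finset.sum_congr rfl fun t _ => ?_
  simp [Complex.mul_re, Bq_apply, Complex.conj_re, Complex.conj_im]

theorem stmt7 (n T : ℕ) (hn : 1 ≤ n) (hT : 1 ≤ T) (N0 : ℝ) (hN0 : 0 < N0)
    (μ : Fin T → ℂ) (μtil : (Fin n → ℝ) → Fin T → ℂ) (hμtil : ContDiff ℝ 2 μtil)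
    (η₀ : Fin n → ℝ) (i j : Fin n) :
    ∫ y, fderiv ℝ (fderiv ℝ (loglik N0 μtil y)) η₀ (Pi.single i 1) (Pi.single j 1)
        ∂(gaussianPi T μ N0)
      = (2 / N0) * (hip (fun t => μ t - μtil η₀ t)
            (fderiv ℝ (fderiv ℝ μtil) η₀ (Pi.single i 1) (Pi.single j 1))
          - hip (fderiv ℝ μtil η₀ (Pi.single i 1)) (fderiv ℝ μtil η₀ (Pi.single j 1))).re := by
  classical
  set d : Fin T → ℂ := fderiv ℝ (fderiv ℝ μtil) η₀ (Pi.single i 1) (Pi.single j 1) with hd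
  set Dv : Fin T → ℂ := fderiv ℝ μtil η₀ (Pi.single i 1) with hDv
  set Dw : Fin T → ℂ := fderiv ℝ μtil η₀ (Pi.single j 1) with hDw
  set R : ℝ := ∑ t, Bq (Dv t) (Dw t) with hR
  have hkey : ∀ y : Fin T → ℂ,
      fderiv ℝ (fderiv ℝ (loglik N0 μtil y)) η₀ (Pi.single i 1) (Pi.single j 1)
        = (2 / N0) * ((∑ t, ((y t - μtil η₀ t).re * (d t).re
            + (y t - μtil η₀ t).im * (d t).im)) - R) := by
    intro y
    rw [key_pointwise hN0 hμtil y η₀ _ _]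
    rw [Finset.sum_congr rfl fun (t : Fin T) _ => Bq_apply (y t - μtil η₀ t) (d t)]
  rw [integral_congr_ae (Filter.Eventually.of_forall hkey)]
  rw [integral_const_mul]
  have hSint : Integrable (fun y : Fin T → ℂ => ∑ t, ((y t - μtil η₀ t).re * (d t).re
      + (y t - μtil η₀ t).im * (d t).im)) (gaussianPi T μ N0) :=
    integrable_finset_sum _ fun t _ => integrable_coord T μ hN0 t (μtil η₀ t) (d t)
  rw [integral_sub hSint (integrable_const R), integral_finset_sum _
    (fun t _ => integrable_coord T μ hN0 t (μtil η₀ t) (d t))]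
  rw [integral_const]
  simp only [measure_univ, probReal_univ, ENNReal.toReal_one, one_smul, smul_eq_mul]
  have hsum : ∀ t : Fin T, ∫ y, ((y t - μtil η₀ t).re * (d t).re
      + (y t - μtil η₀ t).im * (d t).im) ∂(gaussianPi T μ N0)
      = Bq (μ t - μtil η₀ t) (d t) := by
    intro t
    rw [integral_coord T μ hN0 t (μtil η₀ t) (d t), Bq_apply]
  rw [Finset.sum_congr rfl fun t _ => hsum t]
  rw [Complex.sub_re, hip_re, hip_re, one_mul]
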